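/- Suppose a + b = c + d. Then for every n ≥ 1, all real numbers k_1, ..., k_n, and every integer m with 1 ≤ m ≤ n, one has Σ_{i=1}^{2^n} x_i^m = Σ_{i=1}^{2^n} y_i^m. In other words, the numbers x_1, ..., x_{2^n} and y_1, ..., y_{2^n} satisfy the full symmetric system of exponential identities for all powers from 1 up to n. -/

import Mathlib

/-- The pair of sequences `(x^{(t+1)}, y^{(t+1)})` of length `2^(t+1)` (0-based internal
level `t` corresponds to the paper's level `m = t + 1`).  `(seqXY a b c d k t i).1` is the
`i`-th entry (0-based) of `x^{(t+1)}` and `.2` that of `y^{(t+1)}`. -/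
noncomputable def seqXY (a b c d : ℝ) (k : ℕ → ℝ) : ℕ → ℕ → ℝ × ℝ
  | 0, i => if i = 0 then (a + k 1, c + k 1) else (b + k 1, d + k 1)
  | t + 1, i =>
      if i < 2 ^ (t + 1) then seqXY a b c d k t i
      else ((seqXY a b c d k t (i - 2 ^ (t + 1))).2 + k (t + 2),
            (seqXY a b c d k t (i - 2 ^ (t + 1))).1 + k (t + 2))

/-- `X a b c d k n i` is the entry `x_{i+1}` of the sequence `x^{(n)}` (for `n ≥ 1`,
`0 ≤ i < 2^n`). -/
noncomputable def X (a b c d : ℝ) (k : ℕ → ℝ) (n i : ℕ) : ℝ :=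
  (seqXY a b c d k (n - 1) i).1

/-- `Y a b c d k n i` is the entry `y_{i+1}` of the sequence `y^{(n)}` (for `n ≥ 1`,
`0 ≤ i < 2^n`). -/
noncomputable def Y (a b c d : ℝ) (k : ℕ → ℝ) (n i : ℕ) : ℝ :=
  (seqXY a b c d k (n - 1) i).2

lemma key (a b c d : ℝ) (h : a + b = c + d) (k : ℕ → ℝ) :
    ∀ t, ∀ m ≤ t + 1,
      ∑ i ∈ Finset.range (2 ^ (t + 1)), (seqXY a b c d k t i).1 ^ m =
      ∑ i ∈ Finset.range (2 ^ (t + 1)), (seqXY a b c d k t i).2 ^ m := by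
  intro t
  induction t with
  | zero =>
    intro m hm
    interval_cases m <;>
      simp [seqXY, Finset.sum_range_succ] <;> linarith
  | succ t ih =>
    intro m hm
    have hsplit : 2 ^ (t + 2) = 2 ^ (t + 1) + 2 ^ (t + 1) := by ring
    rw [hsplit, Finset.sum_range_add, Finset.sum_range_add]
    have h1 : ∀ i ∈ Finset.range (2 ^ (t + 1)),
        seqXY a b c d k (t + 1) i = seqXY a b c d k t i := by
      intro i hi
      rw [seqXY, if_pos (Finset.mem_range.mp hi)]
    have h2 : ∀ i ∈ Finset.range (2 ^ (t + 1)),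
        seqXY a b c d k (t + 1) (2 ^ (t + 1) + i) =
          ((seqXY a b c d k t i).2 + k (t + 2),
           (seqXY a b c d k t i).1 + k (t + 2)) := by
      intro i hi
      rw [seqXY, if_neg (by omega), Nat.add_sub_cancel_left]
    have e1 : ∑ i ∈ Finset.range (2 ^ (t + 1)), (seqXY a b c d k (t + 1) i).1 ^ m =
        ∑ i ∈ Finset.range (2 ^ (t + 1)), (seqXY a b c d k t i).1 ^ m :=
      Finset.sum_congr rfl fun i hi => by rw [h1 i hi]
    have e2 : ∑ i ∈ Finset.range (2 ^ (t + 1)), (seqXY a b c d k (t + 1) i).2 ^ m =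
        ∑ i ∈ Finset.range (2 ^ (t + 1)), (seqXY a b c d k t i).2 ^ m :=
      Finset.sum_congr rfl fun i hi => by rw [h1 i hi]
    have e3 : ∑ i ∈ Finset.range (2 ^ (t + 1)),
          (seqXY a b c d k (t + 1) (2 ^ (t + 1) + i)).1 ^ m =
        ∑ i ∈ Finset.range (2 ^ (t + 1)), ((seqXY a b c d k t i).2 + k (t + 2)) ^ m :=
      Finset.sum_congr rfl fun i hi => by rw [h2 i hi]
    have e4 : ∑ i ∈ Finset.range (2 ^ (t + 1)),
          (seqXY a b c d k (t + 1) (2 ^ (t + 1) + i)).2 ^ m =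
        ∑ i ∈ Finset.range (2 ^ (t + 1)), ((seqXY a b c d k t i).1 + k (t + 2)) ^ m :=
      Finset.sum_congr rfl fun i hi => by rw [h2 i hi]
    rw [e1, e2, e3, e4]
    simp only [add_pow]
    conv_lhs => rw [Finset.sum_comm]
    conv_rhs => rw [Finset.sum_comm]
    rw [Finset.sum_range_succ (n := m), Finset.sum_range_succ (n := m)]
    simp only [← Finset.sum_mul]
    have hIH : ∀ j ≤ t + 1,
        ∑ i ∈ Finset.range (2 ^ (t + 1)), (seqXY a b c d k t i).1 ^ j =
        ∑ i ∈ Finset.range (2 ^ (t + 1)), (seqXY a b c d k t i).2 ^ j := ih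
    have hj : ∀ j ∈ Finset.range m,
        (∑ i ∈ Finset.range (2 ^ (t + 1)), (seqXY a b c d k t i).2 ^ j) *
          k (t + 2) ^ (m - j) * (m.choose j : ℝ) =
        (∑ i ∈ Finset.range (2 ^ (t + 1)), (seqXY a b c d k t i).1 ^ j) *
          k (t + 2) ^ (m - j) * (m.choose j : ℝ) := by
      intro j hj
      rw [hIH j (by simp at hj; omega)]
    rw [Finset.sum_congr rfl hj]
    simp [Nat.sub_self]
    ring

theorem full_symmetric_system (a b c d : ℝ) (h : a + b = c + d)
    (n : ℕ) (hn : 1 ≤ n) (k : ℕ → ℝ) (m : ℕ) (hm1 : 1 ≤ m) (hmn : m ≤ n) :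
    ∑ i ∈ Finset.range (2 ^ n), X a b c d k n i ^ m =
      ∑ i ∈ Finset.range (2 ^ n), Y a b c d k n i ^ m := by
  obtain ⟨t, rfl⟩ : ∃ t, n = t + 1 := ⟨n - 1, (Nat.succ_pred_eq_of_pos hn).symm⟩
  simpa [X, Y] using key a b c d h k t m (by omega)
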